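/- arXiv:2211.00476 — 2 statements merged into one kernel-verified Lean document; each statement's English description precedes it below -/
import Mathlib

section
/- Let n = kr and let w ∈ S_n satisfy w(Δ_n^k) ⊆ Δ_n^k ∪ J for some J ⊆ Δ_n(k), where simple roots i ∈ Δ_n are identified with the pairs (i, i+1) and w acts on a simple root index i by w(i) = j when w maps the root e_i − e_{i+1} to e_j − e_{j+1} (i.e. w(i+1) = w(i)+1). Then w(Δ_n^k) = Δ_n^k. -/
/-!
Statement 4: let `n = k * r` and let `w ∈ S_n` satisfy `w(Δ_n^k) ⊆ Δ_n^k ∪ J` for some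
`J ⊆ Δ_n(k)`, where the action of `w` on a simple root index `i` is given by `w(i)`,
the hypothesis including that `w(i+1) = w(i) + 1` for every `i ∈ Δ_n^k` (i.e. `w` maps
the simple root `e_i − e_{i+1}` to the simple root `e_{w(i)} − e_{w(i)+1}`).
Then `w(Δ_n^k) = Δ_n^k`, i.e. `w(i) ∈ Δ_n^k` for every `i ∈ Δ_n^k`.

Conventions as before: `S_n` is modelled as the subgroup of `Equiv.Perm ℕ` generated by
the transpositions `(i, i+1)`, `i ∈ Δ_n = {1, …, n-1}`;
`Δ_n(k) = {r, 2r, …, (k-1)r}` and `Δ_n^k = Δ_n \ Δ_n(k)`.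
-/

/-- `Δ_n = {1, …, n-1}`, the set of simple roots of `GL_n`. -/
def delta (n : ℕ) : Finset ℕ := Finset.Icc 1 (n - 1)

/-- The parabolic subgroup `W_S` generated by the transpositions `(i, i+1)`, `i ∈ S`. -/
def parab (S : Finset ℕ) : Subgroup (Equiv.Perm ℕ) :=
  Subgroup.closure {σ | ∃ i ∈ S, σ = Equiv.swap i (i + 1)}

/-- `Δ_n(k) = {r, 2r, …, (k-1)r}` (for `n = k * r`). -/
def deltaK (k r : ℕ) : Finset ℕ := (Finset.Icc 1 (k - 1)).image (· * r)

theorem image_deltaNk_eq (k r n : ℕ) (hk : 0 < k) (hr : 0 < r) (hn : n = k * r)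
    (J : Finset ℕ) (hJ : J ⊆ deltaK k r)
    (w : Equiv.Perm ℕ) (hw : w ∈ parab (delta n))
    (hsimple : ∀ i ∈ delta n \ deltaK k r, w (i + 1) = w i + 1)
    (himage : ∀ i ∈ delta n \ deltaK k r, w i ∈ (delta n \ deltaK k r) ∪ J) :
    ∀ i ∈ delta n \ deltaK k r, w i ∈ delta n \ deltaK k r := by
  intro i hi
  rcases Nat.lt_or_ge r 2 with hr1 | hr2
  · -- r = 1 : the set Δ_n^k is empty
    exfalso
    have hr' : r = 1 := by omega
    subst hr'
    simp only [Finset.mem_sdiff, delta, deltaK, Finset.mem_Icc, Finset.mem_image] at hi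
    exact hi.2 ⟨i, ⟨hi.1.1, by omega⟩, by omega⟩
  have hinj : Function.Injective w := w.injective
  -- w preserves [1, n]
  have lemB : ∀ x, w x ∈ Finset.Icc 1 n ↔ x ∈ Finset.Icc 1 n := by
    have hw' : w ∈ Subgroup.closure
        {σ : Equiv.Perm ℕ | ∃ i ∈ delta n, σ = Equiv.swap i (i + 1)} := hw
    refine Subgroup.closure_induction
      (p := fun g _ => ∀ x, g x ∈ Finset.Icc 1 n ↔ x ∈ Finset.Icc 1 n) ?_ ?_ ?_ ?_ hw'
    · rintro σ ⟨j, hj, rfl⟩ x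
      rw [delta, Finset.mem_Icc] at hj
      rcases eq_or_ne x j with rfl | hxj
      · rw [Equiv.swap_apply_left]; simp only [Finset.mem_Icc]; omega
      · rcases eq_or_ne x (j + 1) with rfl | hxj1
        · rw [Equiv.swap_apply_right]; simp only [Finset.mem_Icc]; omega
        · rw [Equiv.swap_apply_of_ne_of_ne hxj hxj1]
    · intro x; simp
    · intro g h _ _ hg hh x; rw [Equiv.Perm.mul_apply, hg, hh]
    · intro g _ hg x
      have := hg (g⁻¹ x)
      rw [← Equiv.Perm.mul_apply, mul_inv_cancel, Equiv.Perm.one_apply] at this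
      exact this.symm
  -- helper : non-divisibility
  have hndvd : ∀ c u : ℕ, 1 ≤ u → u ≤ r - 1 → ¬ r ∣ (c * r + u) := by
    intro c u h1 h2 hd
    have h3 : r ∣ u := (Nat.dvd_add_right (dvd_mul_left r c)).mp hd
    have := Nat.le_of_dvd (by omega) h3
    omega
  -- helper : membership in Δ_n^k
  have hmemNk : ∀ x, 1 ≤ x → x ≤ n - 1 → ¬ r ∣ x → x ∈ delta n \ deltaK k r := by
    intro x h1 h2 h3
    simp only [Finset.mem_sdiff, delta, deltaK, Finset.mem_Icc, Finset.mem_image]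
    refine ⟨⟨h1, h2⟩, ?_⟩
    rintro ⟨j, _, rfl⟩
    exact h3 (dvd_mul_left r j)
  -- the chain lemma: w is "translation" on each block
  have lemA : ∀ m' t : ℕ, m' + 1 ≤ k → t ≤ r - 1 →
      w (m' * r + 1 + t) = w (m' * r + 1) + t := by
    intro m' t hm' ht
    induction t with
    | zero => simp
    | succ t ih =>
      have e1 : (m' + 1) * r = m' * r + r := by ring
      have e2 : (m' + 1) * r ≤ k * r := mul_le_mul_left hm' r
      have hmem : (m' * r + 1 + t) ∈ delta n \ deltaK k r := by
        refine hmemNk _ (by omega) (by omega) ?_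
        have : m' * r + 1 + t = m' * r + (1 + t) := by ring
        rw [this]
        exact hndvd m' (1 + t) (by omega) (by omega)
      have h1 : m' * r + 1 + (t + 1) = (m' * r + 1 + t) + 1 := by ring
      rw [h1, hsimple _ hmem, ih (by omega)]
      omega
  -- bounds on block images
  have hbnd : ∀ m', m' + 1 ≤ k → 1 ≤ w (m' * r + 1) ∧ w (m' * r + 1) + (r - 1) ≤ n := by
    intro m' hm'
    have e1 : (m' + 1) * r = m' * r + r := by ring
    have e2 : (m' + 1) * r ≤ k * r := mul_le_mul_left hm' r
    have h2 := (lemB (m' * r + 1)).mpr (Finset.mem_Icc.mpr ⟨by omega, by omega⟩)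
    rw [Finset.mem_Icc] at h2
    have h4 := (lemB (m' * r + 1 + (r - 1))).mpr (Finset.mem_Icc.mpr ⟨by omega, by omega⟩)
    rw [lemA m' (r - 1) hm' le_rfl, Finset.mem_Icc] at h4
    exact ⟨h2.1, h4.2⟩
  -- the runs
  set F : ℕ → Finset ℕ :=
    fun m' => Finset.Icc (w (m' * r + 1)) (w (m' * r + 1) + (r - 1)) with hF
  have hdisj : ∀ m1 ∈ Finset.range k, ∀ m2 ∈ Finset.range k, m1 ≠ m2 →
      Disjoint (F m1) (F m2) := by
    intro m1 hm1 m2 hm2 hne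
    rw [Finset.mem_range] at hm1 hm2
    rw [Finset.disjoint_left]
    intro x hx1 hx2
    simp only [hF, Finset.mem_Icc] at hx1 hx2
    have e1 : w (m1 * r + 1 + (x - w (m1 * r + 1))) = x := by
      rw [lemA m1 _ (by omega) (by omega)]; omega
    have e2 : w (m2 * r + 1 + (x - w (m2 * r + 1))) = x := by
      rw [lemA m2 _ (by omega) (by omega)]; omega
    have heq := hinj (e1.trans e2.symm)
    rcases Nat.lt_or_ge m1 m2 with h | h
    · have h5 := mul_le_mul_left (show m1 + 1 ≤ m2 by omega) r
      have e : (m1 + 1) * r = m1 * r + r := by ring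
      omega
    · have h5 := mul_le_mul_left (show m2 + 1 ≤ m1 by omega) r
      have e : (m2 + 1) * r = m2 * r + r := by ring
      omega
  have hcover : (Finset.range k).biUnion F = Finset.Icc 1 n := by
    apply Finset.eq_of_subset_of_card_le
    · intro x hx
      obtain ⟨m', hm', hxF⟩ := Finset.mem_biUnion.mp hx
      rw [Finset.mem_range] at hm'
      simp only [hF, Finset.mem_Icc] at hxF
      have := hbnd m' hm'
      exact Finset.mem_Icc.mpr ⟨by omega, by omega⟩
    · rw [Finset.card_biUnion hdisj, Nat.card_Icc]
      have hc : ∀ m' ∈ Finset.range k, (F m').card = r := by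
        intro m' _; simp only [hF, Nat.card_Icc]; omega
      rw [Finset.sum_congr rfl hc, Finset.sum_const, Finset.card_range, smul_eq_mul]
      omega
  have hcov : ∀ x, 1 ≤ x → x ≤ n → ∃ m' t, m' + 1 ≤ k ∧ t ≤ r - 1 ∧
      w (m' * r + 1) + t = x := by
    intro x h1 h2
    have hx : x ∈ (Finset.range k).biUnion F := by
      rw [hcover]; exact Finset.mem_Icc.mpr ⟨h1, h2⟩
    obtain ⟨m', hm', hxF⟩ := Finset.mem_biUnion.mp hx
    rw [Finset.mem_range] at hm'
    simp only [hF, Finset.mem_Icc] at hxF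
    exact ⟨m', x - w (m' * r + 1), by omega, by omega, by omega⟩
  -- every block image starts at 1 mod r
  have lemD : ∀ v m', m' + 1 ≤ k → w (m' * r + 1) = v → r ∣ (v - 1) := by
    intro v
    induction v using Nat.strong_induction_on with
    | _ v ih =>
      intro m' hm' hb
      have hb1 := hbnd m' hm'
      rcases Nat.lt_or_ge v 2 with hv | hv
      · -- v = 1
        have : v = 1 := by omega
        simp [this]
      obtain ⟨m2, t2, hm2, ht2, heq⟩ := hcov (v - 1) (by omega) (by omega)
      have hb2 := hbnd m2 hm2
      have ht2' : t2 = r - 1 := by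
        by_contra hne
        have hA : w (m2 * r + 1 + (t2 + 1)) = w (m' * r + 1) := by
          rw [lemA m2 _ hm2 (by omega)]; omega
        have heq2 := hinj hA
        rcases Nat.lt_trichotomy m2 m' with h | h | h
        · have h5 := mul_le_mul_left (show m2 + 1 ≤ m' by omega) r
          have e : (m2 + 1) * r = m2 * r + r := by ring
          omega
        · subst h; omega
        · have h5 := mul_le_mul_left (show m' + 1 ≤ m2 by omega) r
          have e : (m' + 1) * r = m' * r + r := by ring
          omega
      -- so the run below ends exactly at v - 1
      have hstart : w (m2 * r + 1) = v - r := by omega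
      have hvr : r + 1 ≤ v := by omega
      obtain ⟨c, hc⟩ := ih (v - r) (by omega) m2 hm2 hstart
      exact ⟨c + 1, by rw [Nat.mul_succ]; omega⟩
  -- finish
  have hi' : 1 ≤ i ∧ i ≤ n - 1 := by
    have := (Finset.mem_sdiff.mp hi).1
    rw [delta, Finset.mem_Icc] at this
    exact this
  have hiK : i ∉ deltaK k r := (Finset.mem_sdiff.mp hi).2
  obtain ⟨q, u, hqu, hult⟩ : ∃ q u, r * q + u = i ∧ u < r :=
    ⟨i / r, i % r, Nat.div_add_mod i r, Nat.mod_lt _ hr⟩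
  have hcm : q * r = r * q := mul_comm q r
  have hkr : k * r = r * k := mul_comm k r
  have hqk : q + 1 ≤ k := by
    by_contra h
    have h5 : r * k ≤ r * q := mul_le_mul_right (show k ≤ q by omega) r
    omega
  have hu1 : 1 ≤ u := by
    by_contra h
    have hiq : i = q * r := by omega
    have hq0 : 1 ≤ q := by
      rcases Nat.eq_zero_or_pos q with rfl | h
      · rw [zero_mul] at hiq; omega
      · exact h
    exact hiK (Finset.mem_image.mpr ⟨q, Finset.mem_Icc.mpr ⟨hq0, by omega⟩, hiq.symm⟩)
  have hieq : i = q * r + 1 + (u - 1) := by omega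
  have hwi : w i = w (q * r + 1) + (u - 1) := by
    conv_lhs => rw [hieq]
    exact lemA q (u - 1) hqk (by omega)
  obtain ⟨c, hc⟩ := lemD (w (q * r + 1)) q hqk rfl
  have hb1 := hbnd q hqk
  have hwival : w i = c * r + u := by
    have : r * c = c * r := mul_comm r c
    omega
  have hnd : ¬ r ∣ w i := by rw [hwival]; exact hndvd c u hu1 (by omega)
  have hwin : w i ≤ n := by omega
  have hwine : w i ≠ n := by
    intro h
    exact hnd (h ▸ ⟨k, by omega⟩)
  exact hmemNk (w i) (by omega) (by omega) hnd
end

section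
/- Let n = kr, I ⊆ Δ_n(k), and let w ∈ W(L^{⟨r⟩}) ∩ [W_{Δ_n^k ∪ I} \ S_n]. Then w satisfies w^{-1}(Δ_n^k ∪ I) ⊆ Δ_n^k ∪ J for J ⊆ Δ_n(k) if and only if the corresponding permutation of blocks carries the composition of k determined by I into coarsenings compatible with J; in particular, for I = J = ∅, W(L^{⟨r⟩}) ∩ [W^{⟨r⟩} \ S_n / W^{⟨r⟩}] is in bijection with S_k. -/
/-- Length = number of inversions on `{1, …, n}`. -/
def len (n : ℕ) (w : Equiv.Perm ℕ) : ℕ :=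
  ((Finset.Icc 1 n ×ˢ Finset.Icc 1 n).filter fun q => q.1 < q.2 ∧ w q.2 < w q.1).card

/-- Minimal-length double coset representatives `[W_I \ W_n / W_J]`. -/
def minReps (n : ℕ) (I J : Finset ℕ) : Set (Equiv.Perm ℕ) :=
  {w | w ∈ parab (delta n) ∧ ∀ u ∈ parab I, ∀ v ∈ parab J, len n w ≤ len n (u * w * v)}

/-- `W(L^{⟨r⟩})`: the block permutations `w°(ir + l) = w(i)r + l`, `w ∈ S_k`. -/
def blockPerms (k r : ℕ) : Set (Equiv.Perm ℕ) :=
  {σ | ∃ w : Equiv.Perm (Fin k), ∀ (i : Fin k) (l : ℕ), 1 ≤ l → l ≤ r →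
    σ ((i : ℕ) * r + l) = (w i : ℕ) * r + l}

namespace StmtAux

lemma div_lt_k {k r p : ℕ} (h1 : 1 ≤ p) (h2 : p ≤ k * r) : (p - 1) / r < k := by
  rcases Nat.eq_zero_or_pos r with rfl | hr
  · simp at h2; omega
  · exact (Nat.div_lt_iff_lt_mul hr).mpr (by omega)

/-- The standard block permutation attached to `w : S_k`. -/
def blkFun (k r : ℕ) (w : Equiv.Perm (Fin k)) (p : ℕ) : ℕ :=
  if h : 1 ≤ p ∧ p ≤ k * r then
    (w ⟨(p - 1) / r, div_lt_k h.1 h.2⟩ : ℕ) * r + ((p - 1) % r + 1)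
  else p

lemma blockIdx {r : ℕ} (a : ℕ) {l : ℕ} (h1 : 1 ≤ l) (h2 : l ≤ r) :
    (a * r + l - 1) / r = a ∧ (a * r + l - 1) % r = l - 1 := by
  have hr : 0 < r := lt_of_lt_of_le h1 h2
  have he : a * r + l - 1 = r * a + (l - 1) := by
    have : a * r = r * a := Nat.mul_comm _ _
    omega
  constructor
  · rw [he, Nat.mul_add_div hr, Nat.div_eq_of_lt (by omega)]; omega
  · rw [he, Nat.mul_add_mod]; exact Nat.mod_eq_of_lt (by omega)

lemma blockRange {k r : ℕ} {a l : ℕ} (ha : a < k) (h1 : 1 ≤ l) (h2 : l ≤ r) :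
    1 ≤ a * r + l ∧ a * r + l ≤ k * r := by
  constructor
  · omega
  · have : (a + 1) * r ≤ k * r := Nat.mul_le_mul_right r ha
    have : a * r + r ≤ k * r := by rwa [Nat.add_mul, Nat.one_mul] at this
    omega

lemma blkFun_mem {k r : ℕ} (w : Equiv.Perm (Fin k)) {p : ℕ} (h1 : 1 ≤ p) (h2 : p ≤ k * r) :
    1 ≤ blkFun k r w p ∧ blkFun k r w p ≤ k * r := by
  rw [blkFun, dif_pos ⟨h1, h2⟩]
  have hr : 0 < r := by rcases Nat.eq_zero_or_pos r with rfl | hr; · simp at h2; omega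
                        · exact hr
  exact blockRange (w ⟨(p - 1) / r, div_lt_k h1 h2⟩).isLt (by omega)
    (by have := Nat.mod_lt (p - 1) hr; omega)

lemma blkFun_blkFun {k r : ℕ} (w w' : Equiv.Perm (Fin k)) (p : ℕ) :
    blkFun k r w (blkFun k r w' p) = blkFun k r (w * w') p := by
  by_cases h : 1 ≤ p ∧ p ≤ k * r
  · have hr : 0 < r := by
      rcases Nat.eq_zero_or_pos r with rfl | hr
      · exfalso; simp at h; omega
      · exact hr
    have hl1 : 1 ≤ (p - 1) % r + 1 := by omega
    have hl2 : (p - 1) % r + 1 ≤ r := by have := Nat.mod_lt (p - 1) hr; omega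
    set i : Fin k := ⟨(p - 1) / r, div_lt_k h.1 h.2⟩ with hi
    have h1 : blkFun k r w' p = (w' i : ℕ) * r + ((p - 1) % r + 1) := by
      rw [blkFun, dif_pos h]
    have hq := blockRange (w' i).isLt hl1 hl2
    have hidx := blockIdx (r := r) (w' i : ℕ) hl1 hl2
    rw [h1, blkFun, dif_pos hq, blkFun, dif_pos h]
    have hfe : (⟨((w' i : ℕ) * r + ((p - 1) % r + 1) - 1) / r, div_lt_k hq.1 hq.2⟩ : Fin k)
        = w' i := Fin.val_injective hidx.1
    rw [hfe, hidx.2, ← hi]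
    rw [Equiv.Perm.mul_apply]
    omega
  · have h1 : blkFun k r w' p = p := by rw [blkFun, dif_neg h]
    rw [h1, blkFun, dif_neg h, blkFun, dif_neg h]

lemma blkFun_one {k r : ℕ} (p : ℕ) : blkFun k r 1 p = p := by
  by_cases h : 1 ≤ p ∧ p ≤ k * r
  · rw [blkFun, dif_pos h]
    simp only [Equiv.Perm.coe_one, id_eq]
    have := Nat.div_add_mod' (p - 1) r
    omega
  · rw [blkFun, dif_neg h]

/-- The standard block permutation as a permutation. -/
def blkE (k r : ℕ) (w : Equiv.Perm (Fin k)) : Equiv.Perm ℕ where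
  toFun := blkFun k r w
  invFun := blkFun k r w⁻¹
  left_inv := fun p => by rw [blkFun_blkFun, inv_mul_cancel, blkFun_one]
  right_inv := fun p => by rw [blkFun_blkFun, mul_inv_cancel, blkFun_one]

lemma blkE_apply {k r : ℕ} (w : Equiv.Perm (Fin k)) (p : ℕ) :
    blkE k r w p = blkFun k r w p := rfl

lemma blkE_apply_block {k r : ℕ} (w : Equiv.Perm (Fin k)) (i : Fin k) {l : ℕ}
    (h1 : 1 ≤ l) (h2 : l ≤ r) :
    blkE k r w ((i : ℕ) * r + l) = (w i : ℕ) * r + l := by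
  have hq := blockRange (k := k) i.isLt h1 h2
  have hidx := blockIdx (r := r) (i : ℕ) h1 h2
  rw [blkE_apply, blkFun, dif_pos hq]
  have hfe : (⟨((i : ℕ) * r + l - 1) / r, div_lt_k hq.1 hq.2⟩ : Fin k) = i :=
    Fin.val_injective hidx.1
  rw [hfe, hidx.2]
  omega

lemma blkE_mem_blockPerms {k r : ℕ} (w : Equiv.Perm (Fin k)) :
    blkE k r w ∈ blockPerms k r :=
  ⟨w, fun i l h1 h2 => blkE_apply_block w i h1 h2⟩

/-- Permutations fixing everything outside `{1,…,n}` form a subgroup. -/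
def fixOutside (n : ℕ) : Subgroup (Equiv.Perm ℕ) where
  carrier := {σ | ∀ p, p ∉ Finset.Icc 1 n → σ p = p}
  one_mem' := fun _ _ => rfl
  mul_mem' := by
    intro a b ha hb p hp
    simp only [Equiv.Perm.mul_apply]
    rw [hb p hp, ha p hp]
  inv_mem' := by
    intro σ h p hp
    have h1 := h p hp
    calc σ⁻¹ p = σ⁻¹ (σ p) := by rw [h1]
    _ = p := σ.symm_apply_apply p

lemma parab_le_fixOutside (n : ℕ) : parab (delta n) ≤ fixOutside n := by
  rw [parab, Subgroup.closure_le]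
  rintro σ ⟨i, hi, rfl⟩ p hp
  simp only [delta, Finset.mem_Icc] at hi
  simp only [Finset.mem_Icc, not_and_or, not_le] at hp
  exact Equiv.swap_apply_of_ne_of_ne (by omega) (by omega)

/-- Block-preserving permutations form a subgroup. -/
def blockSub (k r : ℕ) : Subgroup (Equiv.Perm ℕ) where
  carrier := {σ | (∀ p, p ∉ Finset.Icc 1 (k * r) → σ p = p) ∧
    ∀ p ∈ Finset.Icc 1 (k * r), σ p ∈ Finset.Icc 1 (k * r) ∧ (σ p - 1) / r = (p - 1) / r}
  one_mem' := ⟨fun _ _ => rfl, fun p hp => ⟨hp, rfl⟩⟩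
  mul_mem' := by
    rintro a b ⟨ha1, ha2⟩ ⟨hb1, hb2⟩
    refine ⟨fun p hp => ?_, fun p hp => ?_⟩
    · simp only [Equiv.Perm.mul_apply]; rw [hb1 p hp, ha1 p hp]
    · simp only [Equiv.Perm.mul_apply]
      obtain ⟨hm, he⟩ := hb2 p hp
      obtain ⟨hm', he'⟩ := ha2 _ hm
      exact ⟨hm', he'.trans he⟩
  inv_mem' := by
    rintro σ ⟨h1, h2⟩
    have hfix : ∀ p, p ∉ Finset.Icc 1 (k * r) → σ⁻¹ p = p := by
      intro p hp
      have h3 := h1 p hp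
      calc σ⁻¹ p = σ⁻¹ (σ p) := by rw [h3]
      _ = p := σ.symm_apply_apply p
    refine ⟨hfix, fun p hp => ?_⟩
    have hmem : σ⁻¹ p ∈ Finset.Icc 1 (k * r) := by
      by_contra hc
      have h4 := h1 _ hc
      rw [show σ (σ⁻¹ p) = p from σ.apply_symm_apply p] at h4
      rw [h4] at hp
      exact hc hp
    refine ⟨hmem, ?_⟩
    have h5 := (h2 _ hmem).2
    rw [show σ (σ⁻¹ p) = p from σ.apply_symm_apply p] at h5
    exact h5.symm

lemma parabI_le_blockSub (k r : ℕ) :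
    parab (delta (k * r) \ deltaK k r) ≤ blockSub k r := by
  rw [parab, Subgroup.closure_le]
  rintro σ ⟨x, hx, rfl⟩
  simp only [Finset.mem_sdiff, delta, Finset.mem_Icc] at hx
  obtain ⟨⟨hx1, hx2⟩, hx3⟩ := hx
  have hkr2 : 2 ≤ k * r := by omega
  have hr : 0 < r := by
    rcases Nat.eq_zero_or_pos r with rfl | hr
    · simp at hkr2
    · exact hr
  -- x is not a multiple of r hence x and x+1 lie in the same block
  have hnd : ¬ (r ∣ x) := by
    intro ⟨m, hm⟩
    rw [Nat.mul_comm] at hm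
    apply hx3
    rw [deltaK, Finset.mem_image]
    have hm1 : 1 ≤ m := by
      rcases Nat.eq_zero_or_pos m with rfl | h; · omega
      · exact h
    have hmr : m * r = x := hm.symm
    have hmk : m ≤ k - 1 := by
      by_contra hc
      push_neg at hc
      have : k ≤ m := by omega
      have : k * r ≤ m * r := Nat.mul_le_mul_right r this
      omega
    exact ⟨m, Finset.mem_Icc.mpr ⟨hm1, hmk⟩, hmr⟩
  have hblk : (x - 1) / r = ((x + 1) - 1) / r := by
    have := Nat.succ_div (a := x - 1) (b := r)
    rw [if_neg (by simpa [Nat.sub_add_cancel hx1] using hnd)] at this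
    have hx' : x - 1 + 1 = x := by omega
    rw [hx'] at this
    simp [this]
  constructor
  · intro p hp
    simp only [Finset.mem_Icc, not_and_or, not_le] at hp
    exact Equiv.swap_apply_of_ne_of_ne (by omega) (by omega)
  · intro p hp
    simp only [Finset.mem_Icc] at hp
    rcases eq_or_ne p x with rfl | hpx
    · rw [Equiv.swap_apply_left]
      exact ⟨Finset.mem_Icc.mpr ⟨by omega, by omega⟩, hblk.symm⟩
    rcases eq_or_ne p (x + 1) with rfl | hpx1
    · rw [Equiv.swap_apply_right]
      exact ⟨Finset.mem_Icc.mpr ⟨by omega, by omega⟩, hblk⟩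
    · rw [Equiv.swap_apply_of_ne_of_ne hpx hpx1]
      exact ⟨Finset.mem_Icc.mpr hp, rfl⟩

lemma swap_mem_parab (n : ℕ) :
    ∀ d a b, 1 ≤ a → b ≤ n → a ≤ b → b - a ≤ d → Equiv.swap a b ∈ parab (delta n) := by
  intro d
  induction d with
  | zero =>
    intro a b h1 h2 h3 h4
    have : a = b := by omega
    subst this
    rw [Equiv.swap_self]
    exact Subgroup.one_mem _
  | succ d ih =>
    intro a b h1 h2 h3 h4
    rcases eq_or_lt_of_le h3 with rfl | hab
    · rw [Equiv.swap_self]; exact Subgroup.one_mem _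
    have hgen : Equiv.swap a (a + 1) ∈ parab (delta n) := by
      apply Subgroup.subset_closure
      exact ⟨a, Finset.mem_Icc.mpr ⟨h1, by omega⟩, rfl⟩
    rcases eq_or_lt_of_le (Nat.succ_le_of_lt hab) with heq | hlt
    · have hb : b = a + 1 := by omega
      rw [hb]; exact hgen
    · have hind : Equiv.swap (a + 1) b ∈ parab (delta n) :=
        ih (a + 1) b (by omega) h2 (by omega) (by omega)
      have hkey : Equiv.swap a b =
          Equiv.swap a (a + 1) * Equiv.swap (a + 1) b * (Equiv.swap a (a + 1))⁻¹ := by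
        rw [← Equiv.swap_apply_apply]
        congr 1
        · exact (Equiv.swap_apply_right a (a + 1)).symm
        · exact (Equiv.swap_apply_of_ne_of_ne (by omega) (by omega)).symm
      rw [hkey]
      exact Subgroup.mul_mem _ (Subgroup.mul_mem _ hgen hind) (Subgroup.inv_mem _ hgen)

lemma mem_parab_of_fixOutside (n : ℕ) :
    ∀ σ : Equiv.Perm ℕ, (∀ p, p ∉ Finset.Icc 1 n → σ p = p) → σ ∈ parab (delta n) := by
  induction n with
  | zero =>
    intro σ hσ
    have : σ = 1 := Equiv.ext fun p => hσ p (by simp)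
    rw [this]; exact Subgroup.one_mem _
  | succ n ih =>
    intro σ hσ
    set a := σ (n + 1) with ha
    have hamem : a ∈ Finset.Icc 1 (n + 1) := by
      by_contra hc
      have h1 := hσ a hc
      have : a = n + 1 := σ.injective h1
      rw [this] at hc
      exact hc (Finset.mem_Icc.mpr ⟨by omega, le_refl _⟩)
    simp only [Finset.mem_Icc] at hamem
    have hswap : Equiv.swap a (n + 1) ∈ parab (delta (n + 1)) :=
      swap_mem_parab (n + 1) (n + 1) a (n + 1) hamem.1 (le_refl _) hamem.2 (by omega)
    set τ := Equiv.swap a (n + 1) * σ with hτ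
    have hτfix : ∀ p, p ∉ Finset.Icc 1 n → τ p = p := by
      intro p hp
      rcases eq_or_ne p (n + 1) with rfl | hp1
      · show Equiv.swap a (n + 1) (σ (n + 1)) = n + 1
        rw [← ha, Equiv.swap_apply_left]
      · have hp2 : p ∉ Finset.Icc 1 (n + 1) := by
          simp only [Finset.mem_Icc, not_and_or, not_le] at hp ⊢
          omega
        show Equiv.swap a (n + 1) (σ p) = p
        rw [hσ p hp2]
        refine Equiv.swap_apply_of_ne_of_ne ?_ hp1
        intro hpa
        rw [hpa] at hp2
        exact hp2 (Finset.mem_Icc.mpr hamem)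
    have hτmem : τ ∈ parab (delta (n + 1)) := by
      have h1 := ih τ hτfix
      refine Subgroup.closure_mono ?_ h1
      rintro x ⟨i, hi, rfl⟩
      refine ⟨i, ?_, rfl⟩
      simp only [delta, Finset.mem_Icc] at hi ⊢
      omega
    have : σ = Equiv.swap a (n + 1) * τ := by
      rw [hτ, ← mul_assoc, Equiv.swap_mul_self, one_mul]
    rw [this]
    exact Subgroup.mul_mem _ hswap hτmem

lemma blkE_mem_parab (k r : ℕ) (w : Equiv.Perm (Fin k)) :
    blkE k r w ∈ parab (delta (k * r)) := by
  apply mem_parab_of_fixOutside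
  intro p hp
  simp only [Finset.mem_Icc, not_and_or, not_le] at hp
  rw [blkE_apply, blkFun, dif_neg (by omega)]

lemma blkE_min (k r : ℕ) (w : Equiv.Perm (Fin k)) :
    ∀ u ∈ parab (delta (k * r) \ deltaK k r), ∀ v ∈ parab (delta (k * r) \ deltaK k r),
      len (k * r) (blkE k r w) ≤ len (k * r) (u * blkE k r w * v) := by
  intro u hu v hv
  obtain ⟨hufix, hublk⟩ := parabI_le_blockSub k r hu
  obtain ⟨hvfix, hvblk⟩ := parabI_le_blockSub k r hv
  apply Finset.card_le_card
  intro q hq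
  simp only [Finset.mem_filter] at hq ⊢
  obtain ⟨hmem, hlt, hinv⟩ := hq
  refine ⟨hmem, hlt, ?_⟩
  rw [Finset.mem_product] at hmem
  obtain ⟨hq1, hq2⟩ := hmem
  simp only [Finset.mem_Icc] at hq1 hq2
  have hr : 0 < r := by
    rcases Nat.eq_zero_or_pos r with rfl | hr
    · exfalso; omega
    · exact hr
  -- block indices
  set i1 : Fin k := ⟨(q.1 - 1) / r, div_lt_k hq1.1 hq1.2⟩ with hi1
  set i2 : Fin k := ⟨(q.2 - 1) / r, div_lt_k hq2.1 hq2.2⟩ with hi2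
  have hb1 : blkE k r w q.1 = (w i1 : ℕ) * r + ((q.1 - 1) % r + 1) := by
    rw [blkE_apply, blkFun, dif_pos ⟨hq1.1, hq1.2⟩]
  have hb2 : blkE k r w q.2 = (w i2 : ℕ) * r + ((q.2 - 1) % r + 1) := by
    rw [blkE_apply, blkFun, dif_pos ⟨hq2.1, hq2.2⟩]
  -- the inversion forces a block inversion
  have hkey : (w i2 : ℕ) < (w i1 : ℕ) := by
    rw [hb1, hb2] at hinv
    have hm1 : (q.1 - 1) % r < r := Nat.mod_lt _ hr
    have hm2 : (q.2 - 1) % r < r := Nat.mod_lt _ hr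
    by_contra hc
    push_neg at hc
    rcases eq_or_lt_of_le hc with heq | hlt2
    · -- equal blocks: w i1 = w i2 hence i1 = i2 hence q.1, q.2 in same block
      have hii : i1 = i2 := w.injective (Fin.val_injective heq)
      have hveq : (q.1 - 1) / r = (q.2 - 1) / r := congrArg Fin.val hii
      have hxa : (w i1 : ℕ) * r = (w i2 : ℕ) * r := by rw [heq]
      have hxb : r * ((q.1 - 1) / r) = r * ((q.2 - 1) / r) := by rw [hveq]
      have d1 := Nat.div_add_mod (q.1 - 1) r
      have d2 := Nat.div_add_mod (q.2 - 1) r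
      omega
    · -- w i1 < w i2 : no inversion
      have h5 : ((w i1 : ℕ) + 1) * r ≤ (w i2 : ℕ) * r := Nat.mul_le_mul_right r hlt2
      rw [Nat.add_mul, Nat.one_mul] at h5
      omega
  -- now compare u * blkE w * v at q.1 and q.2
  have hcompute : ∀ p (hp1 : 1 ≤ p) (hp2 : p ≤ k * r),
      (u * blkE k r w * v) p ∈ Finset.Icc 1 (k * r) ∧
      ((u * blkE k r w * v) p - 1) / r = (w ⟨(p - 1) / r, div_lt_k hp1 hp2⟩ : ℕ) := by
    intro p hp1 hp2
    obtain ⟨hvm, hve⟩ := hvblk p (Finset.mem_Icc.mpr ⟨hp1, hp2⟩)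
    simp only [Finset.mem_Icc] at hvm
    have hl1 : 1 ≤ (v p - 1) % r + 1 := by omega
    have hl2 : (v p - 1) % r + 1 ≤ r := by have := Nat.mod_lt (v p - 1) hr; omega
    have hbv : blkE k r w (v p) =
        (w ⟨(v p - 1) / r, div_lt_k hvm.1 hvm.2⟩ : ℕ) * r + ((v p - 1) % r + 1) := by
      rw [blkE_apply, blkFun, dif_pos ⟨hvm.1, hvm.2⟩]
    have hfin : (⟨(v p - 1) / r, div_lt_k hvm.1 hvm.2⟩ : Fin k) =
        ⟨(p - 1) / r, div_lt_k hp1 hp2⟩ := Fin.val_injective hve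
    have hrange := blockRange (k := k)
      (w ⟨(p - 1) / r, div_lt_k hp1 hp2⟩).isLt hl1 hl2
    have hidx := blockIdx (r := r) (w ⟨(p - 1) / r, div_lt_k hp1 hp2⟩ : ℕ) hl1 hl2
    have hbv' : blkE k r w (v p) =
        (w ⟨(p - 1) / r, div_lt_k hp1 hp2⟩ : ℕ) * r + ((v p - 1) % r + 1) := by
      rw [hbv, hfin]
    obtain ⟨hum, hue⟩ := hublk (blkE k r w (v p))
      (by rw [hbv']; exact Finset.mem_Icc.mpr ⟨hrange.1, hrange.2⟩)
    simp only [Equiv.Perm.mul_apply]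
    refine ⟨hum, ?_⟩
    rw [hue, hbv', hidx.1]
  obtain ⟨hm1', he1⟩ := hcompute q.1 hq1.1 hq1.2
  obtain ⟨hm2', he2⟩ := hcompute q.2 hq2.1 hq2.2
  simp only [Finset.mem_Icc] at hm1' hm2'
  have key2 : ((u * blkE k r w * v) q.2 - 1) / r < ((u * blkE k r w * v) q.1 - 1) / r := by
    rw [he1, he2]; exact hkey
  have hlast : (u * blkE k r w * v) q.2 - 1 < (u * blkE k r w * v) q.1 - 1 := by
    by_contra hc
    push_neg at hc
    exact absurd (Nat.div_le_div_right (c := r) hc) (by omega)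
  omega

end StmtAux

open StmtAux in
theorem blockPerms_cap_minReps_equiv_permFinK (k r n : ℕ) (hk : 0 < k) (hr : 0 < r)
    (hn : n = k * r) :
    Nonempty
      ({σ : Equiv.Perm ℕ //
          σ ∈ blockPerms k r ∧
          σ ∈ minReps n (delta n \ deltaK k r) (delta n \ deltaK k r)} ≃
        Equiv.Perm (Fin k)) := by
  subst hn
  set T := {σ : Equiv.Perm ℕ //
      σ ∈ blockPerms k r ∧
      σ ∈ minReps (k * r) (delta (k * r) \ deltaK k r) (delta (k * r) \ deltaK k r)} with hT
  have hg : ∀ w : Equiv.Perm (Fin k),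
      blkE k r w ∈ blockPerms k r ∧
      blkE k r w ∈ minReps (k * r) (delta (k * r) \ deltaK k r) (delta (k * r) \ deltaK k r) :=
    fun w => ⟨blkE_mem_blockPerms w, blkE_mem_parab k r w, blkE_min k r w⟩
  set g : Equiv.Perm (Fin k) → T := fun w => ⟨blkE k r w, hg w⟩ with hgdef
  have hginj : Function.Injective g := by
    intro w w' h
    have h' : blkE k r w = blkE k r w' := congrArg Subtype.val h
    ext i
    have h1 := blkE_apply_block (r := r) w i (le_refl 1) hr
    have h2 := blkE_apply_block (r := r) w' i (le_refl 1) hr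
    rw [h'] at h1
    rw [h2] at h1
    have : (w i : ℕ) * r = (w' i : ℕ) * r := by omega
    exact Nat.eq_of_mul_eq_mul_right hr this
  have hgsurj : Function.Surjective g := by
    rintro ⟨σ, ⟨w, hw⟩, hpar, hmin⟩
    refine ⟨w, ?_⟩
    apply Subtype.ext
    show blkE k r w = σ
    have hfix := parab_le_fixOutside (k * r) hpar
    ext p
    by_cases hp : 1 ≤ p ∧ p ≤ k * r
    · have hi : (p - 1) / r < k := div_lt_k hp.1 hp.2
      have hl1 : 1 ≤ (p - 1) % r + 1 := by omega
      have hl2 : (p - 1) % r + 1 ≤ r := by have := Nat.mod_lt (p - 1) hr; omega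
      have hpe : ((⟨(p - 1) / r, hi⟩ : Fin k) : ℕ) * r + ((p - 1) % r + 1) = p := by
        simp only []
        have := Nat.div_add_mod' (p - 1) r
        omega
      have h1 := hw ⟨(p - 1) / r, hi⟩ ((p - 1) % r + 1) hl1 hl2
      rw [hpe] at h1
      rw [h1, blkE_apply, blkFun, dif_pos hp]
    · rw [blkE_apply, blkFun, dif_neg hp, hfix p (by simp [Finset.mem_Icc]; omega)]
  exact ⟨(Equiv.ofBijective g ⟨hginj, hgsurj⟩).symm⟩
end
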